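/- Let Γ > 0 and let K : ℕ → ℝ satisfy 0 < K(1) = K(2) = K(3) = K(4) and, for every n ≥ 5, K(n) = Γ·[ Σ_{p=1}^{n−1} K(p)·K(n−p) + Σ_{p=2}^{n−1} K(p)·K(n+1−p) + Σ_{p=3}^{n−1} K(p)·K(n+2−p) + Σ_{p=4}^{n−1} K(p)·K(n+3−p) ]. If in addition K(4) ≤ K(5), then the sequence K is non-decreasing: K(n) ≤ K(n+1) for all n ≥ 1. -/

import Mathlib

lemma step_sum (K : ℕ → ℝ) (n j a b : ℕ) (hj : 1 ≤ j) (hjn : j + 1 ≤ n)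
    (ha : a = n + j - 1) (hb : b = n + j)
    (hpos : ∀ m, 1 ≤ m → m ≤ n → 0 ≤ K m)
    (hmono : ∀ m, 1 ≤ m → m + 1 ≤ n → K m ≤ K (m + 1)) :
    (∑ p ∈ Finset.Ico j n, K p * K (a - p)) ≤
    ∑ p ∈ Finset.Ico j (n + 1), K p * K (b - p) := by
  rw [Finset.sum_Ico_succ_top (by omega : j ≤ n)]
  have h1 : (∑ p ∈ Finset.Ico j n, K p * K (a - p)) ≤
      ∑ p ∈ Finset.Ico j n, K p * K (b - p) := by
    apply Finset.sum_le_sum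
    intro p hp
    simp only [Finset.mem_Ico] at hp
    have hm : b - p = (a - p) + 1 := by omega
    rw [hm]
    exact mul_le_mul_of_nonneg_left (hmono _ (by omega) (by omega))
      (hpos p (by omega) (by omega))
  have h2 : 0 ≤ K n * K (b - n) :=
    mul_nonneg (hpos n (by omega) (by omega)) (hpos (b - n) (by omega) (by omega))
  linarith

theorem K_sequence_monotone
    (Γ : ℝ) (hΓ : 0 < Γ)
    (K : ℕ → ℝ) (hKpos : 0 < K 1)
    (h12 : K 1 = K 2) (h23 : K 2 = K 3) (h34 : K 3 = K 4)
    (hrec : ∀ n : ℕ, 5 ≤ n → K n =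
      Γ * ((∑ p ∈ Finset.Ico 1 n, K p * K (n - p))
         + (∑ p ∈ Finset.Ico 2 n, K p * K (n + 1 - p))
         + (∑ p ∈ Finset.Ico 3 n, K p * K (n + 2 - p))
         + (∑ p ∈ Finset.Ico 4 n, K p * K (n + 3 - p))))
    (h45 : K 4 ≤ K 5) :
    ∀ n : ℕ, 1 ≤ n → K n ≤ K (n + 1) := by
  have hK2 : 0 < K 2 := h12 ▸ hKpos
  have hK3 : 0 < K 3 := h23 ▸ hK2
  have hK4 : 0 < K 4 := h34 ▸ hK3
  have hK5 : 0 < K 5 := lt_of_lt_of_le hK4 h45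
  have key : ∀ n : ℕ, (∀ m, 1 ≤ m → m ≤ n → 0 < K m) ∧
      (∀ m, 1 ≤ m → m + 1 ≤ n → K m ≤ K (m + 1)) := by
    intro n
    induction n with
    | zero => exact ⟨fun m h1 h2 => by omega, fun m h1 h2 => by omega⟩
    | succ n ih =>
      obtain ⟨ihpos, ihmono⟩ := ih
      by_cases hn : n + 1 ≤ 5
      · constructor
        · intro m h1 h2
          have h5 : m ≤ 5 := by omega
          interval_cases m
          · exact hKpos
          · exact hK2
          · exact hK3
          · exact hK4
          · exact hK5
        · intro m h1 h2
          have h4 : m ≤ 4 := by omega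
          interval_cases m
          · exact h12.le
          · exact h23.le
          · exact h34.le
          · exact h45
      · -- n ≥ 5
        have hn5 : 5 ≤ n := by omega
        have hpos' : ∀ m, 1 ≤ m → m ≤ n → 0 ≤ K m := fun m h1 h2 => (ihpos m h1 h2).le
        have hstep : K n ≤ K (n + 1) := by
          rw [hrec n hn5, hrec (n + 1) (by omega)]
          have e1 := step_sum K n 1 n (n + 1) (by omega) (by omega) (by omega) (by omega)
            hpos' ihmono
          have e2 := step_sum K n 2 (n + 1) (n + 1 + 1) (by omega) (by omega) (by omega)
            (by omega) hpos' ihmono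
          have e3 := step_sum K n 3 (n + 2) (n + 1 + 2) (by omega) (by omega) (by omega)
            (by omega) hpos' ihmono
          have e4 := step_sum K n 4 (n + 3) (n + 1 + 3) (by omega) (by omega) (by omega)
            (by omega) hpos' ihmono
          have := add_le_add (add_le_add (add_le_add e1 e2) e3) e4
          exact mul_le_mul_of_nonneg_left this hΓ.le
        constructor
        · intro m h1 h2
          rcases Nat.lt_or_ge m (n + 1) with h | h
          · exact ihpos m h1 (by omega)
          · have : m = n + 1 := by omega
            subst this
            exact lt_of_lt_of_le (ihpos n (by omega) le_rfl) hstep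
        · intro m h1 h2
          rcases Nat.lt_or_ge (m + 1) (n + 1) with h | h
          · exact ihmono m h1 (by omega)
          · have : m = n := by omega
            subst this
            exact hstep
  intro n hn
  exact (key (n + 1)).2 n hn (by omega)
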